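/- Let X be a measurable space, λ a probability measure on X, K a Markov kernel on X given X with K(·|x) ≪ λ for every x ∈ X, and Δ ⊆ X a measurable set that is absorbing for K. Let η be a probability measure on X with η ≪ λ, and assume ∑_{t=0}^∞ (ηK^t)(Δᶜ) < ∞ and ∑_{t=0}^∞ (λK^t)(Δᶜ) < ∞. Then the measure γ := ∑_{t=0}^∞ (ηK^t)|_{Δᶜ} is a finite nonnegative measure on X, γ ≪ λ, γ satisfies γ = (η + γK)|_{Δᶜ}, and γ is the unique finite nonnegative measure solution of the equation ξ = (η + ξK)|_{Δᶜ} in the variable ξ. -/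

import Mathlib

open MeasureTheory ProbabilityTheory
open scoped ENNReal

/-- `iterK K μ t` is the measure `μ K^t` obtained by letting a Markov kernel `K` act `t`
times on the measure `μ`. -/
noncomputable def iterK {X : Type*} [MeasurableSpace X] (K : Kernel X X)
    (μ : Measure X) : ℕ → Measure X
  | 0 => μ
  | (t + 1) => (iterK K μ t).bind fun x => K x


section Aux
variable {X : Type*} [MeasurableSpace X]

/-- powers of a kernel -/
noncomputable def Kpow (K : Kernel X X) : ℕ → Kernel X X
  | 0 => Kernel.id
  | n + 1 => K ∘ₖ Kpow K n

instance Kpow.isMarkov (K : Kernel X X) [IsMarkovKernel K] (n : ℕ) :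
    IsMarkovKernel (Kpow K n) := by
  induction n with
  | zero => exact inferInstanceAs (IsMarkovKernel Kernel.id)
  | succ n ih => rw [Kpow]; infer_instance

lemma bind_Kpow_zero (μ : Measure X) : μ.bind (Kpow (X := X) K 0) = μ := by
  have : ⇑(Kpow (X := X) K 0) = Measure.dirac := by
    funext a; simp [Kpow, Kernel.id_apply]
  rw [this, Measure.bind_dirac]


lemma iterK_eq (K : Kernel X X) [IsMarkovKernel K] (μ : Measure X) (n : ℕ) :
    iterK K μ n = μ.bind (Kpow K n) := by
  induction n with
  | zero => exact (bind_Kpow_zero μ).symm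
  | succ n ih =>
      show (iterK K μ n).bind ⇑K = _
      rw [ih, Measure.bind_bind (Kpow K n).measurable.aemeasurable K.measurable.aemeasurable]
      have h : (fun a => (Kpow K n a).bind ⇑K) = ⇑(Kpow K (n+1)) := by
        funext x
        rw [show Kpow K (n+1) = K ∘ₖ Kpow K n from rfl, Kernel.comp_apply]
      rw [h]

lemma Kpow_comm (K : Kernel X X) [IsMarkovKernel K] (n : ℕ) :
    K ∘ₖ Kpow K n = Kpow K n ∘ₖ K := by
  induction n with
  | zero => simp [Kpow]
  | succ n ih =>
      show K ∘ₖ (K ∘ₖ Kpow K n) = (K ∘ₖ Kpow K n) ∘ₖ K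
      conv_rhs => rw [Kernel.comp_assoc, ← ih]

end Aux

section Aux2
variable {X : Type*} [MeasurableSpace X] {Δ : Set X}

lemma prob_compl_zero (hΔ : MeasurableSet Δ) (ν : Measure X) [IsProbabilityMeasure ν]
    (h : ν Δ = 1) : ν Δᶜ = 0 := by
  rw [measure_compl hΔ (measure_ne_top _ _), h, measure_univ, tsub_self]

/-- absorption for an arbitrary Markov kernel -/
lemma absorb_restrict (hΔ : MeasurableSet Δ) (κ : Kernel X X) [IsMarkovKernel κ]
    (hκ : ∀ x ∈ Δ, κ x Δ = 1) (μ : Measure X) :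
    ((μ.restrict Δᶜ).bind ⇑κ).restrict Δᶜ = (μ.bind ⇑κ).restrict Δᶜ := by
  ext s hs
  have hzero : ∫⁻ x in Δ, κ x (s ∩ Δᶜ) ∂μ = 0 := by
    rw [← lintegral_zero (μ := μ.restrict Δ)]
    refine setLIntegral_congr_fun hΔ (fun x hx => ?_)
    exact le_antisymm ((measure_mono Set.inter_subset_right).trans
      (prob_compl_zero hΔ (κ x) (hκ x hx)).le) zero_le
  rw [Measure.restrict_apply hs, Measure.restrict_apply hs,
    Measure.bind_apply (hs.inter hΔ.compl) κ.measurable.aemeasurable,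
    Measure.bind_apply (hs.inter hΔ.compl) κ.measurable.aemeasurable]
  conv_rhs => rw [← lintegral_add_compl (fun x => κ x (s ∩ Δᶜ)) hΔ]
  rw [hzero, zero_add]

lemma habs_pow (hΔ : MeasurableSet Δ) (K : Kernel X X) [IsMarkovKernel K]
    (habs : ∀ x ∈ Δ, K x Δ = 1) :
    ∀ n, ∀ x ∈ Δ, Kpow K n x Δ = 1 := by
  intro n
  induction n with
  | zero => intro x hx; simp [Kpow, Kernel.id_apply, Measure.dirac_apply' _ hΔ, hx]
  | succ n ih =>
      intro x hx
      rw [show Kpow K (n+1) = K ∘ₖ Kpow K n from rfl, Kernel.comp_apply' _ _ _ hΔ,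
        ← lintegral_add_compl (fun y => K y Δ) hΔ]
      have h1 : ∫⁻ y in Δ, K y Δ ∂(Kpow K n x) = 1 := by
        rw [setLIntegral_congr_fun hΔ (fun y hy => habs y hy)]
        simp [Measure.restrict_apply_univ, ih x hx]
      have h2 : ∫⁻ y in Δᶜ, K y Δ ∂(Kpow K n x) = 0 := by
        exact setLIntegral_measure_zero _ _ (prob_compl_zero hΔ _ (ih x hx))
      rw [h1, h2, add_zero]

lemma bind_sum (K : Kernel X X) [IsMarkovKernel K] (μ : ℕ → Measure X) :
    (Measure.sum μ).bind ⇑K = Measure.sum fun n => (μ n).bind ⇑K := by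
  ext s hs
  rw [Measure.bind_apply hs K.measurable.aemeasurable, Measure.sum_apply _ hs, lintegral_sum_measure]
  exact tsum_congr fun n => (Measure.bind_apply hs K.measurable.aemeasurable).symm

lemma bind_add' (K : Kernel X X) [IsMarkovKernel K] (μ ν : Measure X) :
    (μ + ν).bind ⇑K = μ.bind ⇑K + ν.bind ⇑K := by
  ext s hs
  rw [Measure.add_apply, Measure.bind_apply hs K.measurable.aemeasurable,
    Measure.bind_apply hs K.measurable.aemeasurable, Measure.bind_apply hs K.measurable.aemeasurable,
    lintegral_add_measure]

lemma bind_ac {lam : Measure X} (K : Kernel X X) [IsMarkovKernel K]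
    (hac : ∀ x, K x ≪ lam) (μ : Measure X) : μ.bind ⇑K ≪ lam := by
  refine Measure.AbsolutelyContinuous.mk fun s hs h0 => ?_
  rw [Measure.bind_apply hs K.measurable.aemeasurable]
  simp [fun x => hac x h0]

lemma sum_nat_split {X : Type*} [MeasurableSpace X] (μ : ℕ → Measure X) :
    Measure.sum μ = μ 0 + Measure.sum fun n => μ (n + 1) := by
  ext s hs
  rw [Measure.sum_apply _ hs, Measure.add_apply, Measure.sum_apply _ hs]
  exact tsum_eq_zero_add' ENNReal.summable

end Aux2


set_option maxHeartbeats 1000000 in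
/-- Under the stated absorption and absolute-continuity assumptions, the measure
`γ := ∑ₜ (η K^t)|_{Δᶜ}` is a finite measure, `γ ≪ λ`, it satisfies `γ = (η + γK)|_{Δᶜ}`,
and it is the unique finite measure solution of this fixed-point equation. -/
theorem stmt_6 {X : Type*} [MeasurableSpace X] (lam : Measure X) [IsProbabilityMeasure lam]
    (K : Kernel X X) [IsMarkovKernel K] (hac : ∀ x, K x ≪ lam)
    (Δ : Set X) (hΔ : MeasurableSet Δ) (habs : ∀ x ∈ Δ, K x Δ = 1)
    (η : Measure X) [IsProbabilityMeasure η] (hη : η ≪ lam)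
    (hsum_η : ∑' t, iterK K η t Δᶜ < ⊤)
    (hsum_lam : ∑' t, iterK K lam t Δᶜ < ⊤) :
    IsFiniteMeasure (Measure.sum fun t => (iterK K η t).restrict Δᶜ) ∧
    (Measure.sum fun t => (iterK K η t).restrict Δᶜ) ≪ lam ∧
    (Measure.sum fun t => (iterK K η t).restrict Δᶜ)
      = (η + (Measure.sum fun t => (iterK K η t).restrict Δᶜ).bind fun x => K x).restrict Δᶜ ∧
    ∀ ξ : Measure X, IsFiniteMeasure ξ →
      ξ = (η + ξ.bind fun x => K x).restrict Δᶜ →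
      ξ = Measure.sum fun t => (iterK K η t).restrict Δᶜ := by
  set f : ℕ → Measure X := fun t => (iterK K η t).restrict Δᶜ with hf
  -- finiteness
  have hfin : IsFiniteMeasure (Measure.sum f) := by
    constructor
    rw [Measure.sum_apply _ MeasurableSet.univ]
    simpa [f, Measure.restrict_apply_univ] using hsum_η
  -- absolute continuity of the iterates
  have hiac : ∀ t, iterK K η t ≪ lam := by
    intro t
    induction t with
    | zero => exact hη
    | succ t ih => exact bind_ac K hac _
  have hgac : Measure.sum f ≪ lam := by
    refine Measure.AbsolutelyContinuous.mk fun s hs h0 => ?_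
    rw [Measure.sum_apply _ hs]
    have hz : ∀ t, f t s = 0 := by
      intro t
      rw [hf]
      simp only [Measure.restrict_apply hs]
      exact hiac t (measure_mono_null Set.inter_subset_left h0)
    simp [hz]
  -- fixed-point equation
  have habsK : ∀ μ : Measure X,
      ((μ.restrict Δᶜ).bind ⇑K).restrict Δᶜ = (μ.bind ⇑K).restrict Δᶜ :=
    absorb_restrict hΔ K habs
  have heq : Measure.sum f = (η + (Measure.sum f).bind ⇑K).restrict Δᶜ := by
    rw [Measure.restrict_add, bind_sum K f, Measure.restrict_sum _ hΔ.compl]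
    have h2 : (fun t => ((f t).bind ⇑K).restrict Δᶜ) = fun t => f (t + 1) := by
      funext t
      show (((iterK K η t).restrict Δᶜ).bind ⇑K).restrict Δᶜ = (iterK K η (t + 1)).restrict Δᶜ
      rw [habsK (iterK K η t)]
      rfl
    rw [h2, sum_nat_split f]
    congr 1
  refine ⟨hfin, hgac, heq, ?_⟩
  -- uniqueness
  intro ξ hξfin hξ
  have hξ' : ξ = η.restrict Δᶜ + (ξ.bind ⇑K).restrict Δᶜ := by
    rw [← Measure.restrict_add]; exact hξ
  have hξ0 : ξ.restrict Δᶜ = ξ := by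
    conv_lhs => rw [hξ]
    rw [Measure.restrict_restrict hΔ.compl, Set.inter_self, ← hξ]
  have hξac : ξ ≪ lam := by
    have h1 : (η + ξ.bind ⇑K) ≪ lam := by
      refine Measure.AbsolutelyContinuous.mk fun s hs h0 => ?_
      rw [Measure.add_apply, hη h0, bind_ac K hac ξ h0, add_zero]
    rw [hξ]
    exact (Measure.absolutelyContinuous_of_le Measure.restrict_le_self).trans h1
  have hKb : ∀ (n : ℕ) (μ : Measure X),
      ((μ.restrict Δᶜ).bind ⇑(Kpow K n)).restrict Δᶜ = (μ.bind ⇑(Kpow K n)).restrict Δᶜ :=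
    fun n => absorb_restrict hΔ (Kpow K n) (habs_pow hΔ K habs n)
  -- main induction
  have P : ∀ n, ξ = (∑ t ∈ Finset.range n, f t) + (ξ.bind ⇑(Kpow K n)).restrict Δᶜ := by
    intro n
    induction n with
    | zero => rw [Finset.range_zero, Finset.sum_empty, zero_add, bind_Kpow_zero ξ, hξ0]
    | succ n ih =>
        have key : (ξ.bind ⇑(Kpow K n)).restrict Δᶜ
            = f n + (ξ.bind ⇑(Kpow K (n + 1))).restrict Δᶜ := by
          conv_lhs => rw [hξ']
          rw [bind_add' (Kpow K n), Measure.restrict_add, hKb n η, hKb n (ξ.bind ⇑K)]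
          congr 1
          · show (η.bind ⇑(Kpow K n)).restrict Δᶜ = (iterK K η n).restrict Δᶜ
            rw [iterK_eq K η n]
          · rw [Measure.bind_bind K.measurable.aemeasurable (Kpow K n).measurable.aemeasurable]
            have hc : (fun a => (K a).bind ⇑(Kpow K n)) = ⇑(Kpow K (n + 1)) := by
              funext a
              rw [show Kpow K (n + 1) = K ∘ₖ Kpow K n from rfl, Kpow_comm K n,
                Kernel.comp_apply]
            rw [hc]
        calc ξ = (∑ t ∈ Finset.range n, f t) + (ξ.bind ⇑(Kpow K n)).restrict Δᶜ := ih
        _ = (∑ t ∈ Finset.range n, f t) + (f n + (ξ.bind ⇑(Kpow K (n + 1))).restrict Δᶜ) := by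
              rw [key]
        _ = (∑ t ∈ Finset.range (n + 1), f t) + (ξ.bind ⇑(Kpow K (n + 1))).restrict Δᶜ := by
              rw [Finset.sum_range_succ, add_assoc]
  -- remainder tends to zero
  set g : ℕ → X → ℝ≥0∞ := fun n x => Kpow K n x Δᶜ with hg
  have hgm : ∀ n, Measurable (g n) := fun n => Kernel.measurable_coe _ hΔ.compl
  have hsum' : ∑' n, ∫⁻ x, g n x ∂lam < ⊤ := by
    have : ∀ n, ∫⁻ x, g n x ∂lam = iterK K lam n Δᶜ := by
      intro n
      rw [iterK_eq K lam n, Measure.bind_apply hΔ.compl (Kpow K n).measurable.aemeasurable]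
    simpa [this] using hsum_lam
  have h_ae : ∀ᵐ x ∂lam, Filter.Tendsto (fun n => g n x) Filter.atTop (nhds 0) := by
    have hint : ∫⁻ x, ∑' n, g n x ∂lam < ⊤ := by
      rw [lintegral_tsum fun n => (hgm n).aemeasurable]; exact hsum'
    filter_upwards [ae_lt_top (Measurable.ennreal_tsum hgm) hint.ne] with x hx
    exact ENNReal.tendsto_atTop_zero_of_tsum_ne_top hx.ne
  have hrem : Filter.Tendsto (fun n => (ξ.bind ⇑(Kpow K n)) Δᶜ) Filter.atTop (nhds 0) := by
    have hdc := tendsto_lintegral_of_dominated_convergence (μ := ξ) (F := g)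
      (f := fun _ => (0 : ℝ≥0∞)) (bound := fun _ => 1) hgm
      (fun n => Filter.Eventually.of_forall fun x => prob_le_one)
      (by simp [lintegral_one, measure_ne_top]) (hξac.ae_le h_ae)
    simp only [lintegral_zero] at hdc
    have hb : ∀ n, (ξ.bind ⇑(Kpow K n)) Δᶜ = ∫⁻ x, g n x ∂ξ := by
      intro n; rw [Measure.bind_apply hΔ.compl (Kpow K n).measurable.aemeasurable]
    simpa [hb] using hdc
  -- conclude
  ext s hs
  rw [Measure.sum_apply _ hs]
  have hle : ∀ n, ((ξ.bind ⇑(Kpow K n)).restrict Δᶜ) s ≤ (ξ.bind ⇑(Kpow K n)) Δᶜ := by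
    intro n
    rw [Measure.restrict_apply hs]
    exact measure_mono Set.inter_subset_right
  have hrem' : Filter.Tendsto (fun n => ((ξ.bind ⇑(Kpow K n)).restrict Δᶜ) s)
      Filter.atTop (nhds 0) :=
    tendsto_of_tendsto_of_tendsto_of_le_of_le tendsto_const_nhds hrem
      (fun n => zero_le) hle
  have hlim : Filter.Tendsto
      (fun n => (∑ t ∈ Finset.range n, f t s) + ((ξ.bind ⇑(Kpow K n)).restrict Δᶜ) s)
      Filter.atTop (nhds ((∑' t, f t s) + 0)) :=
    (ENNReal.tendsto_nat_tsum _).add hrem'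
  have hconst : ∀ n,
      (∑ t ∈ Finset.range n, f t s) + ((ξ.bind ⇑(Kpow K n)).restrict Δᶜ) s = ξ s := by
    intro n
    conv_rhs => rw [P n]
    rw [Measure.add_apply, Measure.finset_sum_apply]
  simp_rw [hconst] at hlim
  have := tendsto_nhds_unique tendsto_const_nhds hlim
  rw [this, add_zero]
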